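/- Let λ denote Lebesgue measure on the interval (0,1). For every x¹, x² ∈ ℝ, as n → ∞: (a) if x¹ + x² ≤ 0, then n·λ{ u ∈ (0,1) : 1/u > 2 + 2x¹/(n+1) and 1/(1−u) > 2 + 2x²/(n+1) } → (1/2)( (−x¹) + (−x²) ); and (b) if x¹ + x² > 0, then n·λ{ u ∈ (0,1) : 1/u > 2 + 2x¹/(n+1) and 1/(1−u) > 2 + 2x²/(n+1) } → 0. -/

import Mathlib

open MeasureTheory Filter Set

lemma set_eq (a b : ℝ) (ha : 1 < a) (hb : 1 < b) :
    {u : ℝ | u ∈ Ioo (0:ℝ) 1 ∧ 1 / u > a ∧ 1 / (1 - u) > b} = Ioo (1 - 1/b) (1/a) := by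
  have ha0 : 0 < a := by linarith
  have hb0 : 0 < b := by linarith
  ext u
  simp only [mem_setOf_eq, mem_Ioo]
  constructor
  · rintro ⟨⟨hu0, hu1⟩, h1, h2⟩
    have hu1' : 0 < 1 - u := by linarith
    rw [gt_iff_lt, lt_div_iff₀ hu0] at h1
    rw [gt_iff_lt, lt_div_iff₀ hu1'] at h2
    have h2' : 1 - u < 1/b := by rw [lt_div_iff₀ hb0]; nlinarith
    have h1' : u < 1/a := by rw [lt_div_iff₀ ha0]; nlinarith
    exact ⟨by linarith, h1'⟩
  · rintro ⟨h1, h2⟩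
    have h1b : (1:ℝ)/b < 1 := by rw [div_lt_one hb0]; linarith
    have h1a : (1:ℝ)/a < 1 := by rw [div_lt_one ha0]; linarith
    have hu0 : 0 < u := by linarith
    have hu1 : u < 1 := by linarith
    have hu1' : 0 < 1 - u := by linarith
    refine ⟨⟨hu0, hu1⟩, ?_, ?_⟩
    · rw [gt_iff_lt, lt_div_iff₀ hu0]
      rw [lt_div_iff₀ ha0] at h2; nlinarith
    · rw [gt_iff_lt, lt_div_iff₀ hu1']
      have h1' : 1 - u < 1/b := by linarith
      rw [lt_div_iff₀ hb0] at h1'; nlinarith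

theorem uniform_reciprocal_hda :
    ∀ x1 x2 : ℝ,
      (x1 + x2 ≤ 0 →
        Tendsto (fun n : ℕ =>
            (n : ℝ) * (volume {u : ℝ | u ∈ Ioo (0:ℝ) 1 ∧
                1 / u > 2 + 2 * x1 / (n + 1) ∧
                1 / (1 - u) > 2 + 2 * x2 / (n + 1)}).toReal)
          atTop (nhds ((1/2) * ((-x1) + (-x2))))) ∧
      (x1 + x2 > 0 →
        Tendsto (fun n : ℕ =>
            (n : ℝ) * (volume {u : ℝ | u ∈ Ioo (0:ℝ) 1 ∧
                1 / u > 2 + 2 * x1 / (n + 1) ∧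
                1 / (1 - u) > 2 + 2 * x2 / (n + 1)}).toReal)
          atTop (nhds 0)) := by
  intro x1 x2
  set t : ℕ → ℝ := fun n => 2 / ((n:ℝ) + 1) with ht_def
  have ht : Tendsto t atTop (nhds 0) := by
    have : Tendsto (fun n : ℕ => 1 / ((n:ℝ) + 1)) atTop (nhds 0) := tendsto_one_div_add_atTop_nhds_zero_nat
    have h2 := this.const_mul (2:ℝ)
    simpa [ht_def, mul_one_div, div_eq_mul_inv] using h2
  have hnt : Tendsto (fun n : ℕ => (n:ℝ) * t n) atTop (nhds 2) := by
    have heq : ∀ n : ℕ, (n:ℝ) * t n = 2 - 2 / ((n:ℝ) + 1) := by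
      intro n
      have hn : ((n:ℝ) + 1) ≠ 0 := by positivity
      simp only [ht_def]; field_simp; ring
    have h2 := tendsto_one_div_add_atTop_nhds_zero_nat.const_mul (2:ℝ)
    have := (tendsto_const_nhds (x := (2:ℝ)) (f := atTop)).sub h2
    simp only [mul_one_div] at this
    norm_num at this
    exact Tendsto.congr (fun n => (heq n).symm) this
  -- limit of the explicit expression
  have num : Tendsto (fun n : ℕ => -(((n:ℝ)*t n)*(x1+x2) + ((n:ℝ)*t n)*t n*(x1*x2)))
      atTop (nhds (-(2*(x1+x2)))) := by
    have : Tendsto (fun n : ℕ => ((n:ℝ)*t n)*(x1+x2) + ((n:ℝ)*t n)*t n*(x1*x2))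
        atTop (nhds (2*(x1+x2) + 2*0*(x1*x2))) :=
      (hnt.mul_const _).add ((hnt.mul ht).mul_const _)
    simpa using this.neg
  have den : Tendsto (fun n => (2 + t n * x1) * (2 + t n * x2)) atTop (nhds 4) := by
    have : Tendsto (fun n => (2 + t n * x1) * (2 + t n * x2)) atTop
        (nhds ((2 + 0 * x1) * (2 + 0 * x2))) :=
      (tendsto_const_nhds.add (ht.mul_const _)).mul (tendsto_const_nhds.add (ht.mul_const _))
    norm_num at this; exact this
  have hdiv : Tendsto (fun n : ℕ => -(((n:ℝ)*t n)*(x1+x2) + ((n:ℝ)*t n)*t n*(x1*x2)) /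
      ((2 + t n * x1) * (2 + t n * x2))) atTop (nhds (-(x1+x2)/2)) := by
    have := num.div den (by norm_num)
    have he : -(2*(x1+x2))/4 = -(x1+x2)/2 := by ring
    rwa [he] at this
  have hmax : Tendsto (fun n : ℕ => max (-(((n:ℝ)*t n)*(x1+x2) + ((n:ℝ)*t n)*t n*(x1*x2)) /
      ((2 + t n * x1) * (2 + t n * x2))) 0) atTop (nhds (max (-(x1+x2)/2) 0)) :=
    hdiv.max tendsto_const_nhds
  -- eventual equality
  have hev1 : ∀ᶠ n : ℕ in atTop, (1:ℝ) < 2 + t n * x1 := by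
    have : Tendsto (fun n => 2 + t n * x1) atTop (nhds (2 + 0 * x1)) :=
      tendsto_const_nhds.add (ht.mul_const _)
    norm_num at this
    exact this.eventually (eventually_gt_nhds (by norm_num))
  have hev2 : ∀ᶠ n : ℕ in atTop, (1:ℝ) < 2 + t n * x2 := by
    have : Tendsto (fun n => 2 + t n * x2) atTop (nhds (2 + 0 * x2)) :=
      tendsto_const_nhds.add (ht.mul_const _)
    norm_num at this
    exact this.eventually (eventually_gt_nhds (by norm_num))
  have key : Tendsto (fun n : ℕ =>
      (n : ℝ) * (volume {u : ℝ | u ∈ Ioo (0:ℝ) 1 ∧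
          1 / u > 2 + 2 * x1 / (n + 1) ∧
          1 / (1 - u) > 2 + 2 * x2 / (n + 1)}).toReal)
      atTop (nhds (max (-(x1+x2)/2) 0)) := by
    apply hmax.congr'
    filter_upwards [hev1, hev2] with n h1 h2
    have ha0 : (0:ℝ) < 2 + t n * x1 := by linarith
    have hb0 : (0:ℝ) < 2 + t n * x2 := by linarith
    have hset : {u : ℝ | u ∈ Ioo (0:ℝ) 1 ∧
        1 / u > 2 + 2 * x1 / ((n:ℝ) + 1) ∧
        1 / (1 - u) > 2 + 2 * x2 / ((n:ℝ) + 1)} =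
        Ioo (1 - 1/(2 + t n * x2)) (1/(2 + t n * x1)) := by
      have e1 : 2 + 2 * x1 / ((n:ℝ) + 1) = 2 + t n * x1 := by
        simp only [ht_def]; ring
      have e2 : 2 + 2 * x2 / ((n:ℝ) + 1) = 2 + t n * x2 := by
        simp only [ht_def]; ring
      rw [e1, e2]
      exact set_eq _ _ h1 h2
    rw [hset, Real.volume_Ioo, ENNReal.toReal_ofReal']
    have hval : 1/(2 + t n * x1) - (1 - 1/(2 + t n * x2)) =
        -((t n)*(x1+x2) + (t n)*(t n)*(x1*x2)) / ((2 + t n * x1) * (2 + t n * x2)) := by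
      field_simp
      ring
    rw [hval, mul_max_of_nonneg _ _ (Nat.cast_nonneg n), mul_zero]
    congr 1
    field_simp
  refine ⟨fun hle => ?_, fun hgt => ?_⟩
  · have : max (-(x1+x2)/2) 0 = (1/2) * ((-x1) + (-x2)) := by
      rw [max_eq_left (by linarith)]; ring
    rwa [this] at key
  · have : max (-(x1+x2)/2) 0 = 0 := max_eq_right (by linarith)
    rwa [this] at key
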